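/- arXiv:1504.03268 — 5 statements merged into one kernel-verified Lean document; each statement's English description precedes it below -/
import Mathlib

section
/- Let f : ℝⁿ × ℝᵖ → ℝⁿ, let β > 0, and let V : ℝⁿ → ℝ be differentiable with V(0) ≤ β. Suppose the dissipation inequality ∇V(x)ᵀ f(x, w) ≤ wᵀ w holds for all x ∈ ℝⁿ and w ∈ ℝᵖ. Let w : [0, ∞) → ℝᵖ be continuous with ∫₀^∞ ‖w(t)‖² dt ≤ β, and let x : [0, ∞) → ℝⁿ be differentiable with x(0) = 0 and x′(t) = f(x(t), w(t)) for all t ≥ 0. Then V(x(t)) ≤ 2β for all t ≥ 0; that is, the sublevel set {x : V(x) ≤ 2β} is invariant along the trajectory. -/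
open RealInnerProductSpace

/-- **Reachability, Proposition 3.**
If a differentiable `V` with `V(0) ≤ β` satisfies the dissipation inequality
`⟨∇V(x), f(x,w)⟩ ≤ wᵀw` for all `x, w`, and the disturbance satisfies the energy
bound `∫₀^∞ ‖w(t)‖² dt ≤ β`, then along any trajectory starting at the origin with
`x′ = f(x, w)` one has `V(x(t)) ≤ 2β` for all `t ≥ 0`. -/
theorem stmt7 (n p : ℕ)
    (f : EuclideanSpace ℝ (Fin n) → EuclideanSpace ℝ (Fin p) → EuclideanSpace ℝ (Fin n))
    (β : ℝ) (hβ : 0 < β)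
    (V : EuclideanSpace ℝ (Fin n) → ℝ)
    (hVdiff : Differentiable ℝ V)
    (hV0 : V 0 ≤ β)
    (hdiss : ∀ x w, ⟪gradient V x, f x w⟫ ≤ ⟪w, w⟫)
    (w : ℝ → EuclideanSpace ℝ (Fin p)) (hw : Continuous w)
    (hwE : ∫⁻ t in Set.Ioi (0 : ℝ), ENNReal.ofReal (‖w t‖ ^ 2) ≤ ENNReal.ofReal β)
    (x : ℝ → EuclideanSpace ℝ (Fin n)) (hx0 : x 0 = 0)
    (hx : ∀ t ≥ (0 : ℝ), HasDerivAt x (f (x t) (w t)) t) :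
    ∀ t ≥ (0 : ℝ), V (x t) ≤ 2 * β := by
  intro t ht
  set φ : ℝ → ℝ := fun s => ‖w s‖ ^ 2 with hφ
  have hφc : Continuous φ := by continuity
  set F : ℝ → ℝ := fun u => ∫ s in (0 : ℝ)..u, φ s with hF
  have hFderiv : ∀ u : ℝ, HasDerivAt F (φ u) u := fun u =>
    (hφc.integral_hasStrictDerivAt 0 u).hasDerivAt
  -- derivative of V ∘ x
  have hVx : ∀ u ≥ (0 : ℝ),
      HasDerivAt (fun s => V (x s)) ⟪gradient V (x u), f (x u) (w u)⟫ u := by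
    intro u hu
    have h1 := (hVdiff (x u)).hasGradientAt.hasFDerivAt.comp_hasDerivAt u (hx u hu)
    simpa [InnerProductSpace.toDual_apply_apply, Function.comp_def] using h1
  -- G := F - V ∘ x is monotone on [0, ∞)
  set G : ℝ → ℝ := fun s => F s - V (x s) with hG
  have hGderiv : ∀ u ≥ (0 : ℝ),
      HasDerivAt G (φ u - ⟪gradient V (x u), f (x u) (w u)⟫) u := fun u hu =>
    (hFderiv u).sub (hVx u hu)
  have hmono : MonotoneOn G (Set.Ici (0 : ℝ)) := by
    apply monotoneOn_of_deriv_nonneg (convex_Ici 0)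
    · exact fun u hu => ((hGderiv u hu).continuousAt).continuousWithinAt
    · intro u hu
      rw [interior_Ici] at hu
      exact ((hGderiv u (le_of_lt hu)).differentiableAt).differentiableWithinAt
    · intro u hu
      rw [interior_Ici] at hu
      rw [(hGderiv u (le_of_lt hu)).deriv]
      have := hdiss (x u) (w u)
      have h2 : ⟪w u, w u⟫ = φ u := real_inner_self_eq_norm_sq (w u)
      linarith
  have hG0 : G 0 ≤ G t := hmono Set.self_mem_Ici ht ht
  have hF0 : F 0 = 0 := by simp [hF]
  -- bound F t ≤ β
  have hFt : F t ≤ β := by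
    have hInt : MeasureTheory.IntegrableOn φ (Set.Ioc 0 t) :=
      hφc.integrableOn_Ioc
    have hFt_eq : F t = ∫ s in Set.Ioc 0 t, φ s := by
      show (∫ s in (0:ℝ)..t, φ s) = _
      rw [intervalIntegral.integral_of_le ht]
    have h1 : ENNReal.ofReal (F t) = ∫⁻ s in Set.Ioc 0 t, ENNReal.ofReal (φ s) := by
      rw [hFt_eq]
      exact MeasureTheory.ofReal_integral_eq_lintegral_ofReal hInt
        (Filter.Eventually.of_forall fun s => sq_nonneg _)
    have h2 : (∫⁻ s in Set.Ioc 0 t, ENNReal.ofReal (φ s)) ≤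
        ∫⁻ s in Set.Ioi 0, ENNReal.ofReal (φ s) :=
      MeasureTheory.lintegral_mono_set Set.Ioc_subset_Ioi_self
    have h3 : ENNReal.ofReal (F t) ≤ ENNReal.ofReal β := by
      rw [h1]; exact le_trans h2 hwE
    have hFnn : 0 ≤ F t := by
      rw [hFt_eq]
      exact MeasureTheory.integral_nonneg fun s => sq_nonneg _
    rwa [ENNReal.ofReal_le_ofReal_iff hβ.le] at h3
  have : V (x t) ≤ F t + V (x 0) := by
    simp only [hG, hF0] at hG0; linarith
  rw [hx0] at this
  linarith
end

section
/- Let N and N_g be positive integers and let P be a symmetric real N×N matrix all of whose entries lie in {0, 1}, which is positive semidefinite, has rank N_g, and has all diagonal entries equal to 1. Then there exists an N×N_g real matrix ρ all of whose entries lie in {0, 1}, satisfying Σ_{j=1}^{N_g} ρ_{ij} = 1 for every i ∈ {1,…,N}, such that P = ρ ρᵀ. -/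
open Matrix

/-- **Proposition 4, factorization.**
A symmetric `{0,1}`-valued positive semidefinite `N × N` matrix `P` of rank `N_g`
with unit diagonal factors as `P = ρ ρᵀ` for a `{0,1}`-valued `N × N_g` matrix `ρ`
each of whose rows sums to `1`. -/
theorem stmt9 (N Ng : ℕ) (hN : 0 < N) (hNg : 0 < Ng)
    (P : Matrix (Fin N) (Fin N) ℝ) (hsymm : P.IsSymm)
    (h01 : ∀ i j, P i j = 0 ∨ P i j = 1)
    (hpsd : P.PosSemidef)
    (hrank : P.rank = Ng)
    (hdiag : ∀ i, P i i = 1) :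
    ∃ ρ : Matrix (Fin N) (Fin Ng) ℝ,
      (∀ i j, ρ i j = 0 ∨ ρ i j = 1) ∧
      (∀ i, ∑ j, ρ i j = 1) ∧
      P = ρ * ρᵀ := by
  classical
  have hsym : ∀ a b, P a b = P b a := fun a b => by
    conv_lhs => rw [← hsymm]
    rfl
  have htrans : ∀ i j k : Fin N, P i j = 1 → P j k = 1 → P i k = 1 := by
    intro i j k hij hjk
    rcases h01 i k with h | h
    · exfalso
      set x : Fin N → ℝ := fun l =>
        (if l = i then (1:ℝ) else 0) + (if l = k then 1 else 0) - (if l = j then 1 else 0)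
        with hx
      have key : ∀ c : Fin N → ℝ, ∑ a, x a * c a = c i + c k - c j := by
        intro c
        simp [hx, add_mul, sub_mul, ite_mul, Finset.sum_add_distrib, Finset.sum_sub_distrib]
      have h0 := hpsd.dotProduct_mulVec_nonneg x
      have hmv : ∀ a, (P *ᵥ x) a = P a i + P a k - P a j := by
        intro a
        have : (P *ᵥ x) a = ∑ b, x b * P a b := by
          simp [mulVec, dotProduct, mul_comm]
        rw [this, key]
      have hdp : star x ⬝ᵥ (P *ᵥ x) = -1 := by
        have : star x ⬝ᵥ (P *ᵥ x) = ∑ a, x a * (P *ᵥ x) a := by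
          simp [dotProduct]
        rw [this]
        have := key (fun a => P a i + P a k - P a j)
        simp only [hmv]
        rw [this]
        rw [hdiag i, hdiag j, hdiag k, hij, hjk, h, hsym k i, hsym k j, hsym j i, h, hij, hjk]
        ring
      rw [hdp] at h0
      linarith
    · exact h
  set s : Setoid (Fin N) :=
    ⟨fun i k => P i k = 1,
     fun i => hdiag i,
     fun {i k} h => (hsym k i).trans h,
     fun {i j k} h1 h2 => htrans i j k h1 h2⟩ with hs
  letI : Fintype (Quotient s) := Fintype.ofFinite _
  set ρ' : Matrix (Fin N) (Quotient s) ℝ :=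
    fun i q => if Quotient.mk s i = q then 1 else 0 with hρ'
  have hfac : P = ρ' * ρ'ᵀ := by
    ext i k
    have : (ρ' * ρ'ᵀ) i k = if Quotient.mk s i = Quotient.mk s k then (1:ℝ) else 0 := by
      simp only [mul_apply, transpose_apply]
      simp [hρ', ite_and, eq_comm]
    rw [this]
    by_cases hik : Quotient.mk s i = Quotient.mk s k
    · rw [if_pos hik]
      exact Quotient.eq.mp hik
    · rw [if_neg hik]
      rcases h01 i k with h | h
      · exact h
      · exact absurd (Quotient.sound h) hik
  have hinj : Function.Injective ρ'.mulVecLin := by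
    rw [← LinearMap.ker_eq_bot]
    rw [LinearMap.ker_eq_bot']
    intro v hv
    funext q
    obtain ⟨i, rfl⟩ := Quotient.exists_rep q
    have : ρ'.mulVecLin v i = v (Quotient.mk s i) := by
      simp only [Matrix.mulVecLin_apply, mulVec, dotProduct]
      simp [hρ', ite_mul]
    rw [hv] at this
    simpa using this.symm
  have hcard : Fintype.card (Quotient s) = Ng := by
    have h1 : (ρ' * ρ'ᵀ).rank = ρ'.rank := Matrix.rank_self_mul_transpose ρ'
    have h2 : ρ'.rank = Fintype.card (Quotient s) := by
      rw [Matrix.rank, LinearMap.finrank_range_of_inj hinj]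
      simp [Module.finrank_fintype_fun_eq_card]
    rw [← hrank, hfac, h1, h2]
  obtain ⟨e⟩ : Nonempty (Quotient s ≃ Fin Ng) := ⟨Fintype.equivFinOfCardEq hcard⟩
  refine ⟨fun i j => ρ' i (e.symm j), ?_, ?_, ?_⟩
  · intro i j
    simp only [hρ']
    split <;> simp
  · intro i
    have : ∀ j : Fin Ng, ρ' i (e.symm j) = if e (Quotient.mk s i) = j then (1:ℝ) else 0 := by
      intro j
      simp only [hρ']
      congr 1
      simp [Equiv.eq_symm_apply, eq_comm]
    simp [this]
  · rw [hfac]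
    ext i k
    simp only [mul_apply, transpose_apply]
    exact (Fintype.sum_equiv e.symm _ _ (fun j => rfl)).symm
end

section
/- Let N and N_g be positive integers and let P be a symmetric real N×N matrix all of whose entries lie in {0, 1}, which is positive semidefinite, has rank N_g, and has all diagonal entries equal to 1. Then there exist a permutation matrix T ∈ ℝ^{N×N} and positive integers N₁,…,N_{N_g} with N₁ + … + N_{N_g} = N such that P = T · diag(J_{N₁},…,J_{N_{N_g}}) · Tᵀ, where J_k denotes the k×k matrix all of whose entries are 1 and diag(J_{N₁},…,J_{N_{N_g}}) is the block-diagonal matrix with these all-ones blocks. -/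
open Matrix

/-- **Proposition 4, block structure.**
A symmetric `{0,1}`-valued positive semidefinite `N × N` matrix `P` of rank `N_g`
with unit diagonal is permutation-similar to a block-diagonal matrix of all-ones
blocks `J_{N₁}, …, J_{N_{N_g}}` with `N₁ + ⋯ + N_{N_g} = N` and each `Nⱼ > 0`.
The block-diagonal matrix `diag(J_{N₁}, …)` on `Σ j, Fin (Nⱼ)` is transported to an
`N × N` matrix along a bijection `e : (Σ j, Fin (Nⱼ)) ≃ Fin N`. -/
theorem stmt10 (N Ng : ℕ) (hN : 0 < N) (hNg : 0 < Ng)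
    (P : Matrix (Fin N) (Fin N) ℝ) (hsymm : P.IsSymm)
    (h01 : ∀ i j, P i j = 0 ∨ P i j = 1)
    (hpsd : P.PosSemidef)
    (hrank : P.rank = Ng)
    (hdiag : ∀ i, P i i = 1) :
    ∃ (σ : Equiv.Perm (Fin N)) (c : Fin Ng → ℕ)
      (e : (Σ j : Fin Ng, Fin (c j)) ≃ Fin N),
      (∀ j, 0 < c j) ∧ (∑ j, c j = N) ∧
      P = (σ.permMatrix ℝ) *
        (Matrix.reindex e e
          (Matrix.blockDiagonal' fun j => Matrix.of fun (_ _ : Fin (c j)) => (1 : ℝ))) *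
        (σ.permMatrix ℝ)ᵀ := by
  classical
  have hsym' : ∀ i j, P i j = P j i := fun i j => (congrFun (congrFun hsymm i) j).symm
  have hq : ∀ x : Fin N → ℝ, 0 ≤ x ⬝ᵥ P *ᵥ x := by
    intro x
    have := hpsd.dotProduct_mulVec_nonneg x
    simpa using this
  have key : ∀ a b, (Pi.single a (1:ℝ)) ⬝ᵥ (P *ᵥ Pi.single b 1) = P a b := by
    intro a b
    simp [Matrix.mulVec_single, single_dotProduct]
  -- transitivity
  have htrans : ∀ {i j k}, P i j = 1 → P j k = 1 → P i k = 1 := by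
    intro i j k hij hjk
    rcases h01 i k with h0 | h1
    · exfalso
      have h0' := hq (Pi.single i 1 - Pi.single j 1 + Pi.single k 1)
      have expand : (Pi.single i (1:ℝ) - Pi.single j 1 + Pi.single k 1) ⬝ᵥ
          P *ᵥ (Pi.single i 1 - Pi.single j 1 + Pi.single k 1)
          = P i i - P i j + P i k - P j i + P j j - P j k + P k i - P k j + P k k := by
        simp only [Matrix.mulVec_add, Matrix.mulVec_sub, add_dotProduct,
          sub_dotProduct, dotProduct_add, dotProduct_sub, key]
        ring
      rw [expand, hdiag i, hdiag j, hdiag k, hij, hjk, h0, hsym' j i, hij,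
        hsym' k i, h0, hsym' k j, hjk] at h0'
      linarith
    · exact h1
  -- the equivalence relation
  let s : Setoid (Fin N) :=
    ⟨fun i j => P i j = 1,
     ⟨fun i => hdiag i, fun {i j} h => by rw [hsym']; exact h,
      fun {i j k} h1 h2 => htrans h1 h2⟩⟩
  let Q := Quotient s
  haveI : Fintype Q := Fintype.ofFinite _
  -- the row function
  have rowWD : ∀ i i', (s.r i i') → (fun j => P i j) = fun j => P i' j := by
    intro i i' h
    funext j
    have hii' : P i i' = 1 := h
    rcases h01 i j with h0 | h1
    · rcases h01 i' j with h0' | h1'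
      · rw [h0, h0']
      · exact absurd (htrans hii' h1') (by rw [h0]; norm_num)
    · rw [h1, htrans (by rw [hsym']; exact hii') h1]
  let χ : Q → (Fin N → ℝ) := Quotient.lift (fun i j => P i j) rowWD
  have hchi : ∀ q i, χ q i = if q = Quotient.mk s i then 1 else 0 := by
    intro q i
    induction q using Quotient.inductionOn with
    | h m =>
      by_cases h : Quotient.mk s m = Quotient.mk s i
      · rw [if_pos h]
        exact Quotient.exact h
      · rw [if_neg h]
        rcases h01 m i with h0 | h1
        · exact h0
        · exact absurd (Quotient.sound h1) h
  have hlin : LinearIndependent ℝ χ := by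
    rw [Fintype.linearIndependent_iff]
    intro g hg q
    obtain ⟨i, hi⟩ := Quotient.exists_rep q
    have := congrFun hg i
    simp only [Finset.sum_apply, Pi.smul_apply, smul_eq_mul, Pi.zero_apply, hchi] at this
    rw [Finset.sum_congr rfl (fun q' _ => by rw [mul_ite, mul_one, mul_zero]),
      Finset.sum_ite_eq' Finset.univ (Quotient.mk s i) g] at this
    rw [← hi]
    simpa using this
  have hrange : Set.range (fun i => P i) = Set.range χ := by
    have h1 : (fun i => P i) = χ ∘ Quotient.mk s := rfl
    rw [h1]
    exact Function.Surjective.range_comp (fun q => Quotient.exists_rep q) χ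
  have hcardQ : Fintype.card Q = Ng := by
    rw [← hrank, Matrix.rank_eq_finrank_span_row]
    have : Set.range P.row = Set.range χ := hrange
    rw [this, finrank_span_eq_card hlin]
  let f : Q ≃ Fin Ng := Fintype.equivFinOfCardEq hcardQ
  haveI instFib : ∀ q : Q, Fintype {i : Fin N // Quotient.mk s i = q} :=
    fun q => Fintype.ofFinite _
  let c : Fin Ng → ℕ := fun j => Fintype.card {i : Fin N // Quotient.mk s i = f.symm j}
  let F : ∀ j : Fin Ng, Fin (c j) ≃ {i : Fin N // Quotient.mk s i = f.symm j} :=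
    fun j => (Fintype.equivFin _).symm
  let e : (Σ j : Fin Ng, Fin (c j)) ≃ Fin N :=
    (Equiv.sigmaCongr f.symm F).trans (Equiv.sigmaFiberEquiv (Quotient.mk s))
  have he : ∀ p : (Σ j : Fin Ng, Fin (c j)), Quotient.mk s (e p) = f.symm p.1 := by
    rintro ⟨j, k⟩
    exact (F j k).2
  have he' : ∀ i : Fin N, (e.symm i).1 = f (Quotient.mk s i) := by
    intro i
    have h1 := he (e.symm i)
    rw [e.apply_symm_apply] at h1
    rw [h1, f.apply_symm_apply]
  refine ⟨1, c, e, ?_, ?_, ?_⟩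
  · intro j
    obtain ⟨i, hi⟩ := Quotient.exists_rep (f.symm j)
    exact Fintype.card_pos_iff.2 ⟨⟨i, hi⟩⟩
  · have := Fintype.card_congr e
    simpa [Fintype.card_sigma] using this
  · have hperm : ((1 : Equiv.Perm (Fin N)).permMatrix ℝ) = 1 := by
      ext i j
      simp [Equiv.Perm.permMatrix, PEquiv.toMatrix, Equiv.toPEquiv, Matrix.one_apply, eq_comm]
    rw [hperm, Matrix.transpose_one, Matrix.one_mul, Matrix.mul_one]
    ext i j
    rw [Matrix.reindex_apply, Matrix.submatrix_apply, Matrix.blockDiagonal'_apply]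
    by_cases hP : Quotient.mk s i = Quotient.mk s j
    · rw [dif_pos (by rw [he' i, he' j, hP])]
      exact Quotient.exact hP
    · rw [dif_neg (fun h => hP (f.injective (by rw [← he' i, ← he' j, h])))]
      rcases h01 i j with h0 | h1
      · exact h0
      · exact absurd (Quotient.sound h1) hP
end

section
/- Let N and N_g be positive integers and let P be a symmetric real N×N matrix all of whose entries lie in {0, 1}, which is positive semidefinite, has rank N_g, and has all diagonal entries equal to 1. Then there exist positive integers N₁,…,N_{N_g} with N₁ + … + N_{N_g} = N such that the characteristic polynomial of P equals X^{N − N_g} · ∏_{j=1}^{N_g} (X − N_j); in particular, the nonzero eigenvalues of P, counted with multiplicity, are exactly the group sizes N₁,…,N_{N_g}. -/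
open Matrix Polynomial

private lemma charpoly_diagonal' {n : Type*} [Fintype n] [DecidableEq n] (d : n → ℝ) :
    (Matrix.diagonal d).charpoly = ∏ i, (X - C (d i)) := by
  have h : charmatrix (Matrix.diagonal d) = Matrix.diagonal fun i => (X : ℝ[X]) - C (d i) := by
    ext i j
    by_cases hij : i = j
    · subst hij; simp [charmatrix_apply_eq]
    · rw [charmatrix_apply_ne _ _ _ hij, Matrix.diagonal_apply_ne _ hij,
        Matrix.diagonal_apply_ne _ hij, map_zero, neg_zero]
  rw [Matrix.charpoly, h, Matrix.det_diagonal]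

private theorem aux {N Ng : ℕ} (hN : 0 < N) (P : Matrix (Fin N) (Fin N) ℝ)
    (s : Setoid (Fin N))
    (hkey1 : ∀ i j, Quotient.mk s i = Quotient.mk s j → P i j = 1)
    (hkey0 : ∀ i j, Quotient.mk s i ≠ Quotient.mk s j → P i j = 0)
    (hrank : P.rank = Ng) :
    ∃ c : Fin Ng → ℕ,
      (∀ j, 0 < c j) ∧ (∑ j, c j = N) ∧
      P.charpoly = X ^ (N - Ng) * ∏ j, (X - C ((c j : ℝ))) := by
  classical
  letI : Fintype (Quotient s) := Fintype.ofFinite _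
  set Q := Quotient s with hQ
  let mk : Fin N → Q := fun i => Quotient.mk s i
  have hkey : ∀ i j, P i j = if mk i = mk j then 1 else 0 := by
    intro i j
    by_cases h : mk i = mk j
    · rw [if_pos h]; exact hkey1 i j h
    · rw [if_neg h]; exact hkey0 i j h
  let rep : Q → Fin N := fun q => q.out
  have hrep : ∀ q, mk (rep q) = q := fun q => Quotient.out_eq q
  let m : Q → ℕ := fun q => (Finset.univ.filter fun i => mk i = q).card
  have hm1 : ∀ q, 0 < m q :=
    fun q => Finset.card_pos.mpr ⟨rep q, Finset.mem_filter.mpr ⟨Finset.mem_univ _, hrep q⟩⟩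
  have hsum : ∑ q : Q, m q = N := by
    have := Finset.card_eq_sum_card_fiberwise
      (f := mk) (s := Finset.univ) (t := Finset.univ) (fun x _ => Finset.mem_univ _)
    simpa using this.symm
  -- rank computation
  let B : Matrix (Fin N) Q ℝ := Matrix.of fun i q => if mk i = q then 1 else 0
  have hPB : P = B * Bᵀ := by
    ext i j
    rw [Matrix.mul_apply, hkey i j]
    by_cases h : mk i = mk j <;>
      simp [B, Matrix.transpose_apply, h, ite_mul, mul_ite, Finset.sum_ite_eq] <;>
      rw [Fintype.sum_eq_single (mk j) (by intro x hx; simp [Ne.symm hx])] <;> simp [h]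
  have hBtB : Bᵀ * B = Matrix.diagonal (fun q => (m q : ℝ)) := by
    ext q q'
    rw [Matrix.mul_apply]
    by_cases h : q = q'
    · subst h
      rw [Matrix.diagonal_apply_eq]
      have he : ∀ x : Fin N, (Bᵀ q x * B x q) = if mk x = q then (1:ℝ) else 0 := by
        intro x
        by_cases hx : mk x = q <;> simp [B, Matrix.transpose_apply, hx]
      rw [Finset.sum_congr rfl fun x _ => he x, Finset.sum_boole]
    · rw [Matrix.diagonal_apply_ne _ h]
      apply Finset.sum_eq_zero
      intro i _
      simp only [B, Matrix.transpose_apply, Matrix.of_apply]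
      by_cases h1 : mk i = q
      · rw [if_neg (fun h2 => h (h1.symm.trans h2)), mul_zero]
      · rw [if_neg h1, zero_mul]
  have hcardQ : Fintype.card Q = Ng := by
    have h1 : P.rank = B.rank := by rw [hPB, Matrix.rank_self_mul_transpose]
    have h2 : B.rank = (Bᵀ * B).rank := (Matrix.rank_transpose_mul_self B).symm
    rw [hBtB, Matrix.rank_diagonal] at h2
    have h3 : Fintype.card {q // (m q : ℝ) ≠ 0} = Fintype.card Q :=
      Fintype.card_congr (Equiv.subtypeUnivEquiv fun q => by
        exact_mod_cast (hm1 q).ne')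
    rw [h1, h2, h3] at hrank
    exact hrank
  -- eigen data
  let d : Fin N → ℝ := fun j => if rep (mk j) = j then (m (mk j) : ℝ) else 0
  let v : Fin N → (Fin N → ℝ) := fun j i =>
    if rep (mk j) = j then (if mk i = mk j then 1 else 0)
    else ((if i = j then 1 else 0) - (if i = rep (mk j) then 1 else 0))
  have hreprep : ∀ q, rep (mk (rep q)) = rep q := fun q => by rw [hrep q]
  have hPv : ∀ j, P *ᵥ v j = d j • v j := by
    intro j
    by_cases hj : rep (mk j) = j
    · funext i
      have hv : v j = fun i => if mk i = mk j then (1:ℝ) else 0 := by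
        funext i; simp only [v, if_pos hj]
      have hd : d j = (m (mk j) : ℝ) := if_pos hj
      rw [hv, Pi.smul_apply, smul_eq_mul, hd]
      simp only [Matrix.mulVec, dotProduct]
      by_cases hi : mk i = mk j
      · rw [if_pos hi, mul_one]
        have he : ∀ k, P i k * (if mk k = mk j then (1:ℝ) else 0)
            = if mk k = mk j then 1 else 0 := by
          intro k
          by_cases hk : mk k = mk j
          · rw [if_pos hk, mul_one, hkey1 i k (hi.trans hk.symm)]
          · simp [hk]
        rw [Finset.sum_congr rfl fun k _ => he k, Finset.sum_boole]
      · rw [if_neg hi, mul_zero]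
        apply Finset.sum_eq_zero
        intro k _
        by_cases hk : mk k = mk j
        · rw [hkey0 i k (fun h => hi (h.trans hk)), zero_mul]
        · rw [if_neg hk, mul_zero]
    · funext i
      have hv : v j = fun i => (if i = j then (1:ℝ) else 0) - (if i = rep (mk j) then 1 else 0) := by
        funext i; simp only [v, if_neg hj]
      have hd : d j = 0 := if_neg hj
      have hj' : j ≠ rep (mk j) := fun h => hj h.symm
      rw [hv, hd, zero_smul]
      simp only [Matrix.mulVec, dotProduct]
      have he : ∀ k, P i k * ((if k = j then (1:ℝ) else 0) - (if k = rep (mk j) then 1 else 0))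
          = (if k = j then P i k else 0) - (if k = rep (mk j) then P i k else 0) := by
        intro k; by_cases h1 : k = j <;> by_cases h2 : k = rep (mk j) <;> simp [h1, h2, hj, hj']
      rw [Finset.sum_congr rfl fun k _ => he k, Finset.sum_sub_distrib,
        Finset.sum_ite_eq' Finset.univ j, Finset.sum_ite_eq' Finset.univ (rep (mk j))]
      simp only [Finset.mem_univ, if_pos]
      rw [hkey i j, hkey i (rep (mk j)), hrep (mk j), sub_self]
      rfl
  have hli : LinearIndependent ℝ v := by
    rw [Fintype.linearIndependent_iff]
    intro g hg
    have hco : ∀ i, ∑ j, g j * v j i = 0 := by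
      intro i
      have := congrFun hg i
      simpa [Finset.sum_apply] using this
    have hA : ∀ j, rep (mk j) ≠ j → g (rep (mk j)) + g j = 0 := by
      intro j hj
      have hj' : j ≠ rep (mk j) := fun h => hj h.symm
      have h1 : ∀ j', v j' j = (if j' = rep (mk j) then 1 else 0) + (if j' = j then 1 else 0) := by
        intro j'
        by_cases hj2 : rep (mk j') = j'
        · simp only [v, if_pos hj2]
          by_cases hqq : mk j = mk j'
          · have hride : j' = rep (mk j) := by rw [hqq]; exact hj2.symm
            have hne : j' ≠ j := fun h => hj (by rw [← hride, h])
            rw [if_pos hqq, if_pos hride, if_neg hne, add_zero]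
          · have hne1 : j' ≠ rep (mk j) := fun h => hqq (by rw [h, hrep])
            have hne2 : j' ≠ j := fun h => hqq (by rw [h])
            rw [if_neg hqq, if_neg hne1, if_neg hne2, add_zero]
        · simp only [v, if_neg hj2]
          have hc1 : j ≠ rep (mk j') := fun h =>
            hj (by rw [show mk j = mk j' from by rw [h, hrep], ← h])
          have hc2 : j' ≠ rep (mk j) := fun h => hj2 (by rw [h]; exact hreprep (mk j))
          rw [if_neg hc1, sub_zero, if_neg hc2, zero_add]
          by_cases h : j = j'
          · rw [if_pos h, if_pos h.symm]
          · rw [if_neg h, if_neg fun hh => h hh.symm]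
      have he2 : ∀ j', g j' * v j' j
          = (if j' = rep (mk j) then g j' else 0) + (if j' = j then g j' else 0) := by
        intro j'
        rw [h1 j', mul_add, mul_ite, mul_one, mul_zero, mul_ite, mul_one, mul_zero]
      have hs := hco j
      rw [Finset.sum_congr rfl fun j' _ => he2 j', Finset.sum_add_distrib,
        Finset.sum_ite_eq' Finset.univ (rep (mk j)) g,
        Finset.sum_ite_eq' Finset.univ j g] at hs
      simpa using hs
    have hB : ∀ j, rep (mk j) = j → g j = 0 := by
      intro j hj
      have h1 : ∀ j', v j' j = (if j' = j then g j' * 0 + 2 else 0)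
          - (if mk j' = mk j then 1 else 0) := by
        intro j'
        by_cases hj2 : rep (mk j') = j'
        · simp only [v, if_pos hj2]
          by_cases he : j' = j
          · subst he; simp; norm_num
          · have hq : mk j ≠ mk j' := fun h => he (by rw [← hj2, ← h]; exact hj)
            have hq' : mk j' ≠ mk j := fun h => hq h.symm
            rw [if_neg hq, if_neg he, if_neg hq', sub_zero]
        · simp only [v, if_neg hj2]
          have hne : j' ≠ j := fun h => hj2 (by rw [h]; exact hj)
          have hne2 : j ≠ j' := fun h => hne h.symm
          rw [if_neg hne2, if_neg hne]
          congr 1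
          by_cases hc : mk j' = mk j
          · rw [if_pos hc, if_pos (show j = rep (mk j') from by rw [hc]; exact hj.symm)]
          · rw [if_neg hc, if_neg fun h => hc (by rw [h, hrep])]
      have he2 : ∀ j', g j' * v j' j
          = (if j' = j then g j' * (g j' * 0 + 2) else 0)
            - (if mk j' = mk j then g j' else 0) := by
        intro j'
        rw [h1 j', mul_sub, mul_ite, mul_zero, mul_ite, mul_one, mul_zero]
      have hs := hco j
      rw [Finset.sum_congr rfl fun j' _ => he2 j', Finset.sum_sub_distrib,
        Finset.sum_ite_eq' Finset.univ j, ← Finset.sum_filter] at hs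
      simp only [Finset.mem_univ, if_pos, mul_zero, zero_add] at hs
      have hterm : ∀ j' ∈ Finset.univ.filter (fun j' => mk j' = mk j),
          g j' = -g j + (if j' = j then 2 * g j else 0) := by
        intro j' hj'
        rcases Finset.mem_filter.mp hj' with ⟨-, hq⟩
        by_cases he : j' = j
        · subst he; simp; ring
        · have hrep' : rep (mk j') ≠ j' := fun h => he (by rw [← h, hq]; exact hj)
          have h2 := hA j' hrep'
          rw [show rep (mk j') = j from by rw [hq]; exact hj] at h2
          rw [if_neg he]
          linarith
      rw [Finset.sum_congr rfl hterm, Finset.sum_add_distrib, Finset.sum_const,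
        Finset.sum_ite_eq' _ j] at hs
      have hmem : j ∈ Finset.univ.filter (fun j' => mk j' = mk j) :=
        Finset.mem_filter.mpr ⟨Finset.mem_univ _, rfl⟩
      rw [if_pos hmem] at hs
      have hcard : (Finset.univ.filter (fun j' => mk j' = mk j)).card = m (mk j) := rfl
      rw [hcard, nsmul_eq_mul] at hs
      have hmpos : (0:ℝ) < (m (mk j) : ℝ) := by exact_mod_cast hm1 (mk j)
      have hz : (m (mk j) : ℝ) * g j = 0 := by linarith
      rcases mul_eq_zero.mp hz with h | h
      · exact absurd h hmpos.ne'
      · exact h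
    intro i
    by_cases hi : rep (mk i) = i
    · exact hB i hi
    · have h1 := hA i hi
      have h2 := hB (rep (mk i)) (hreprep (mk i))
      linarith
  -- basis and diagonalization
  have hnem : Nonempty (Fin N) := ⟨⟨0, hN⟩⟩
  have hfr : Fintype.card (Fin N) = Module.finrank ℝ (Fin N → ℝ) := by
    rw [Module.finrank_fintype_fun_eq_card]
  let b : Module.Basis (Fin N) ℝ (Fin N → ℝ) := basisOfLinearIndependentOfCardEqFinrank hli hfr
  have hb : ⇑b = v := coe_basisOfLinearIndependentOfCardEqFinrank hli hfr
  have hmat : LinearMap.toMatrix b b (Matrix.toLin' P) = Matrix.diagonal d := by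
    ext i j
    rw [LinearMap.toMatrix_apply]
    have h1 : Matrix.toLin' P (b j) = d j • b j := by
      rw [Matrix.toLin'_apply, show b j = v j from congrFun hb j]
      exact hPv j
    rw [h1, _root_.map_smul, Module.Basis.repr_self]
    by_cases h : i = j
    · subst h; simp
    · simp [Finsupp.single_apply, Ne.symm h, Matrix.diagonal_apply_ne _ h]
  have e1 : LinearMap.toMatrix (Pi.basisFun ℝ (Fin N)) (Pi.basisFun ℝ (Fin N))
      (Matrix.toLin' P) = P := by
    rw [LinearMap.toMatrix_eq_toMatrix', LinearMap.toMatrix'_toLin']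
  have hcp : P.charpoly = ∏ j : Fin N, (X - C (d j)) := by
    rw [← charpoly_diagonal' d, ← e1, LinearMap.charpoly_toMatrix, ← hmat,
      LinearMap.charpoly_toMatrix]
  -- bookkeeping
  have hRS : (Finset.univ.filter (fun j : Fin N => rep (mk j) = j)).card = Ng := by
    rw [← hcardQ, ← Finset.card_univ]
    apply Finset.card_bij (fun j _ => mk j)
    · intro a ha; exact Finset.mem_univ _
    · intro a ha a' ha' hab
      rcases Finset.mem_filter.mp ha with ⟨-, ha⟩
      rcases Finset.mem_filter.mp ha' with ⟨-, ha'⟩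
      rw [← ha, ← ha', hab]
    · intro q _
      exact ⟨rep q, Finset.mem_filter.mpr ⟨Finset.mem_univ _, hreprep q⟩, hrep q⟩
  have hsplit : ∏ j : Fin N, (X - C (d j))
      = (∏ j ∈ Finset.univ.filter (fun j : Fin N => rep (mk j) = j), (X - C (d j)))
        * ∏ j ∈ Finset.univ.filter (fun j : Fin N => ¬ rep (mk j) = j), (X - C (d j)) :=
    (Finset.prod_filter_mul_prod_filter_not Finset.univ _ _).symm
  have hzero : ∏ j ∈ Finset.univ.filter (fun j : Fin N => ¬ rep (mk j) = j), (X - C (d j))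
      = X ^ (N - Ng) := by
    rw [Finset.prod_congr rfl (fun j hj => show (X : ℝ[X]) - C (d j) = X from ?_),
      Finset.prod_const]
    · congr 1
      have := Finset.card_filter_add_card_filter_not
        (s := (Finset.univ : Finset (Fin N))) (p := fun j : Fin N => rep (mk j) = j)
      rw [hRS] at this
      simp only [Finset.card_univ, Fintype.card_fin] at this
      omega
    · rcases Finset.mem_filter.mp hj with ⟨-, hj⟩
      rw [show d j = 0 from if_neg hj, map_zero, sub_zero]
  have hrs2 : ∏ j ∈ Finset.univ.filter (fun j : Fin N => rep (mk j) = j), (X - C (d j))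
      = ∏ q : Q, (X - C ((m q : ℝ))) := by
    apply Finset.prod_bij (fun j _ => mk j)
    · intro a ha; exact Finset.mem_univ _
    · intro a ha a' ha' hab
      rcases Finset.mem_filter.mp ha with ⟨-, ha⟩
      rcases Finset.mem_filter.mp ha' with ⟨-, ha'⟩
      rw [← ha, ← ha', hab]
    · intro q _
      exact ⟨rep q, Finset.mem_filter.mpr ⟨Finset.mem_univ _, hreprep q⟩, hrep q⟩
    · intro a ha
      rcases Finset.mem_filter.mp ha with ⟨-, ha⟩
      rw [show d a = (m (mk a) : ℝ) from if_pos ha]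
  let f : Fin Ng ≃ Q := (Fintype.equivFinOfCardEq hcardQ).symm
  refine ⟨fun j => m (f j), fun j => hm1 (f j), ?_, ?_⟩
  · rw [← hsum]; exact Equiv.sum_comp f (fun q => m q)
  · rw [hcp, hsplit, hzero, hrs2, mul_comm]
    congr 1
    exact (Equiv.prod_comp f (fun q => (X : ℝ[X]) - C ((m q : ℝ)))).symm

/-- **Proposition 4, eigenvalues.**
For a symmetric `{0,1}`-valued positive semidefinite `N × N` matrix `P` of rank
`N_g` with unit diagonal, there are positive integers `N₁, …, N_{N_g}` summing to
`N` such that the characteristic polynomial of `P` is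
`X^{N − N_g} · ∏ⱼ (X − Nⱼ)`: the nonzero eigenvalues of `P`, with multiplicity,
are exactly the group sizes. -/
theorem stmt11 (N Ng : ℕ) (hN : 0 < N) (hNg : 0 < Ng)
    (P : Matrix (Fin N) (Fin N) ℝ) (hsymm : P.IsSymm)
    (h01 : ∀ i j, P i j = 0 ∨ P i j = 1)
    (hpsd : P.PosSemidef)
    (hrank : P.rank = Ng)
    (hdiag : ∀ i, P i i = 1) :
    ∃ c : Fin Ng → ℕ,
      (∀ j, 0 < c j) ∧ (∑ j, c j = N) ∧
      P.charpoly = X ^ (N - Ng) * ∏ j, (X - C ((c j : ℝ))) := by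
  classical
  have hsy : ∀ a b, P b a = P a b := fun a b => hsymm.apply a b
  have htr : ∀ {i j k : Fin N}, P i j = 1 → P j k = 1 → P i k = 1 := by
    intro i j k hij hjk
    have hq : ∀ a b, Pi.single a (1:ℝ) ⬝ᵥ (P *ᵥ Pi.single b 1) = P a b := by
      intro a b
      simp [Matrix.mulVec_single, single_dotProduct]
    set u : Fin N → ℝ := Pi.single i 1 - Pi.single j 1 + Pi.single k 1 with hu
    have h0 : 0 ≤ u ⬝ᵥ (P *ᵥ u) := by simpa using hpsd.dotProduct_mulVec_nonneg u
    have hexp : u ⬝ᵥ (P *ᵥ u) =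
        P i i - P i j + P i k - (P j i - P j j + P j k) + (P k i - P k j + P k k) := by
      simp only [hu, Matrix.mulVec_add, Matrix.mulVec_sub, dotProduct_add,
        dotProduct_sub, add_dotProduct, sub_dotProduct, hq]
      ring
    rw [hexp, hdiag, hdiag, hdiag, hij, hjk, hsy i j, hsy j k, hij, hjk, hsy i k] at h0
    rcases h01 i k with h | h
    · rw [h] at h0; norm_num at h0
    · exact h
  let s : Setoid (Fin N) :=
    ⟨fun i j => P i j = 1,
      ⟨fun i => hdiag i, fun {a b} h => (hsy a b).trans h, fun {a b c} h1 h2 => htr h1 h2⟩⟩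
  have hkey1 : ∀ i j, Quotient.mk s i = Quotient.mk s j → P i j = 1 := by
    intro i j h
    exact Quotient.eq.mp h
  have hkey0 : ∀ i j, Quotient.mk s i ≠ Quotient.mk s j → P i j = 0 := by
    intro i j h
    rcases h01 i j with h0 | h1
    · exact h0
    · exact absurd (Quotient.sound h1) h
  exact aux hN P s hkey1 hkey0 hrank
end

section
/- Let A ∈ ℝ^{n×n}, B ∈ ℝ^{n×p}, C ∈ ℝ^{q×n}, D ∈ ℝ^{q×p} be real matrices, let P be a symmetric positive semidefinite real n×n matrix, and let X be a symmetric real (p+q)×(p+q) matrix. Assume the dissipation condition: for all x ∈ ℝⁿ and v ∈ ℝᵖ, 2 xᵀ P (A x + B v) ≤ [v; C x + D v]ᵀ X [v; C x + D v]. Let v : [0, ∞) → ℝᵖ be continuous and let x : [0, ∞) → ℝⁿ be differentiable with x(0) = 0 and x′(t) = A x(t) + B v(t) for all t ≥ 0, and set y(t) = C x(t) + D v(t). Then for every T ≥ 0, ∫₀ᵀ [v(t); y(t)]ᵀ X [v(t); y(t)] dt ≥ x(T)ᵀ P x(T) ≥ 0; in particular the closed-loop linear system satisfies the time-domain integral quadratic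 constraint defined by the static multiplier X. -/
open Matrix

lemma quad_deriv {n : ℕ} (P : Matrix (Fin n) (Fin n) ℝ) (hPs : Pᵀ = P)
    (x : ℝ → Fin n → ℝ) (x' : Fin n → ℝ) (t : ℝ) (hx : HasDerivAt x x' t) :
    HasDerivAt (fun s => x s ⬝ᵥ P.mulVec (x s)) (2 * (x t ⬝ᵥ P.mulVec x')) t := by
  have hxi : ∀ i, HasDerivAt (fun s => x s i) (x' i) t := fun i => hasDerivAt_pi.mp hx i
  have h : HasDerivAt (fun s => ∑ i, x s i * ∑ j, P i j * x s j)
      (∑ i, (x' i * ∑ j, P i j * x t j + x t i * ∑ j, P i j * x' j)) t :=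
    HasDerivAt.fun_sum fun i _ =>
      (hxi i).mul (HasDerivAt.fun_sum fun j _ => (hxi j).const_mul (P i j))
  have hfun : (fun s => x s ⬝ᵥ P.mulVec (x s)) = fun s => ∑ i, x s i * ∑ j, P i j * x s j := by
    funext s; simp [dotProduct, Matrix.mulVec]
  have hval : (∑ i, (x' i * ∑ j, P i j * x t j + x t i * ∑ j, P i j * x' j))
      = 2 * (x t ⬝ᵥ P.mulVec x') := by
    have h1 : (∑ i, x' i * ∑ j, P i j * x t j) = x' ⬝ᵥ P.mulVec (x t) := by
      simp [dotProduct, Matrix.mulVec]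
    have h2 : (∑ i, x t i * ∑ j, P i j * x' j) = x t ⬝ᵥ P.mulVec x' := by
      simp [dotProduct, Matrix.mulVec]
    have h3 : x' ⬝ᵥ P.mulVec (x t) = x t ⬝ᵥ P.mulVec x' := by
      rw [Matrix.dotProduct_mulVec, ← Matrix.mulVec_transpose, hPs, dotProduct_comm]
    rw [Finset.sum_add_distrib, h1, h2, h3]; ring
  rw [hfun]; rw [← hval]; exact h

lemma stmt14_continuous_sum_elim {p q : ℕ} :
    Continuous fun u : (Fin p → ℝ) × (Fin q → ℝ) => Sum.elim u.1 u.2 := by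
  apply continuous_pi
  rintro (a | b)
  · exact (continuous_apply a).comp continuous_fst
  · exact (continuous_apply b).comp continuous_snd

set_option maxHeartbeats 1000000 in
/-- **LTI system satisfies the IQC defined by a static multiplier.**
If a quadratic storage function `V(x) = xᵀPx` with `P ⪰ 0` satisfies the dissipation
inequality `2xᵀP(Ax + Bv) ≤ [v; Cx + Dv]ᵀ X [v; Cx + Dv]` for all `x, v`, then along
any trajectory `x′ = Ax + Bv` with `x(0) = 0` and output `y = Cx + Dv`, for every
`T ≥ 0`, `∫₀ᵀ [v; y]ᵀ X [v; y] dt ≥ x(T)ᵀ P x(T) ≥ 0`. -/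
theorem stmt14 (n p q : ℕ)
    (A : Matrix (Fin n) (Fin n) ℝ) (B : Matrix (Fin n) (Fin p) ℝ)
    (C : Matrix (Fin q) (Fin n) ℝ) (D : Matrix (Fin q) (Fin p) ℝ)
    (P : Matrix (Fin n) (Fin n) ℝ) (hP : P.PosSemidef)
    (X : Matrix (Fin p ⊕ Fin q) (Fin p ⊕ Fin q) ℝ) (hX : X.IsSymm)
    (hdiss : ∀ (x : Fin n → ℝ) (v : Fin p → ℝ),
      2 * (x ⬝ᵥ P.mulVec (A.mulVec x + B.mulVec v)) ≤
        (Sum.elim v (C.mulVec x + D.mulVec v)) ⬝ᵥ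
          X.mulVec (Sum.elim v (C.mulVec x + D.mulVec v)))
    (v : ℝ → Fin p → ℝ) (hv : Continuous v)
    (x : ℝ → Fin n → ℝ) (hx0 : x 0 = 0)
    (hx : ∀ t ≥ (0 : ℝ), HasDerivAt x (A.mulVec (x t) + B.mulVec (v t)) t)
    (y : ℝ → Fin q → ℝ) (hy : ∀ t, y t = C.mulVec (x t) + D.mulVec (v t)) :
    ∀ T ≥ (0 : ℝ),
      x T ⬝ᵥ P.mulVec (x T) ≤
        (∫ t in (0 : ℝ)..T, (Sum.elim (v t) (y t)) ⬝ᵥ X.mulVec (Sum.elim (v t) (y t))) ∧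
      0 ≤ x T ⬝ᵥ P.mulVec (x T) := by
  have hPs : Pᵀ = P := by
    have := hP.1
    rw [Matrix.IsHermitian, Matrix.conjTranspose_eq_transpose_of_trivial] at this; exact this
  intro T hT
  have hnn : 0 ≤ x T ⬝ᵥ P.mulVec (x T) := by
    have := hP.dotProduct_mulVec_nonneg (x T)
    simpa using this
  refine ⟨?_, hnn⟩
  set g : ℝ → ℝ := fun t => 2 * (x t ⬝ᵥ P.mulVec (A.mulVec (x t) + B.mulVec (v t))) with hgdef
  set h : ℝ → ℝ := fun t =>
    (Sum.elim (v t) (y t)) ⬝ᵥ X.mulVec (Sum.elim (v t) (y t)) with hhdef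
  have huIcc : Set.uIcc (0 : ℝ) T = Set.Icc 0 T := Set.uIcc_of_le hT
  -- continuity of x on [0, T]
  have hxc : ContinuousOn x (Set.Icc 0 T) := fun t ht =>
    (hx t ht.1).continuousAt.continuousWithinAt
  -- continuity of g
  have hF : Continuous fun u : (Fin n → ℝ) × (Fin p → ℝ) =>
      2 * (u.1 ⬝ᵥ P.mulVec (A.mulVec u.1 + B.mulVec u.2)) := by
    apply continuous_const.mul
    exact continuous_fst.dotProduct <|
      continuous_const.matrix_mulVec <|
        (continuous_const.matrix_mulVec continuous_fst).add
          (continuous_const.matrix_mulVec continuous_snd)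
  have hgc : ContinuousOn g (Set.Icc 0 T) := by
    have := hF.comp_continuousOn (hxc.prodMk hv.continuousOn); exact this
  -- continuity of h
  have hG : Continuous fun u : (Fin n → ℝ) × (Fin p → ℝ) =>
      (Sum.elim u.2 (C.mulVec u.1 + D.mulVec u.2)) ⬝ᵥ
        X.mulVec (Sum.elim u.2 (C.mulVec u.1 + D.mulVec u.2)) := by
    have hse : Continuous fun u : (Fin n → ℝ) × (Fin p → ℝ) =>
        Sum.elim u.2 (C.mulVec u.1 + D.mulVec u.2) := by
      refine stmt14_continuous_sum_elim.comp (Continuous.prodMk continuous_snd ?_)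
      exact (continuous_const.matrix_mulVec continuous_fst).add
        (continuous_const.matrix_mulVec continuous_snd)
    exact hse.dotProduct (continuous_const.matrix_mulVec hse)
  have hhc : ContinuousOn h (Set.Icc 0 T) := by
    have := hG.comp_continuousOn (hxc.prodMk hv.continuousOn)
    refine ContinuousOn.congr this ?_
    intro t _
    simp [hhdef, hy t]
  have hgint : IntervalIntegrable g MeasureTheory.volume 0 T :=
    (huIcc ▸ hgc : ContinuousOn g (Set.uIcc 0 T)).intervalIntegrable
  have hhint : IntervalIntegrable h MeasureTheory.volume 0 T :=
    (huIcc ▸ hhc : ContinuousOn h (Set.uIcc 0 T)).intervalIntegrable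
  -- FTC: xᵀPx at T equals ∫ g
  have hderiv : ∀ t ∈ Set.uIcc (0 : ℝ) T,
      HasDerivAt (fun s => x s ⬝ᵥ P.mulVec (x s)) (g t) t := by
    intro t ht
    rw [huIcc] at ht
    exact quad_deriv P hPs x _ t (hx t ht.1)
  have key := intervalIntegral.integral_eq_sub_of_hasDerivAt hderiv hgint
  have hV0 : x 0 ⬝ᵥ P.mulVec (x 0) = 0 := by simp [hx0]
  have hVT : x T ⬝ᵥ P.mulVec (x T) = ∫ t in (0:ℝ)..T, g t := by
    rw [key, hV0, sub_zero]
  rw [hVT]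
  apply intervalIntegral.integral_mono_on hT hgint hhint
  intro t ht
  have := hdiss (x t) (v t)
  simpa [hgdef, hhdef, hy t] using this
end
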